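/- Let m_x > m_y and c := m_xy* + m_yx* > 0 with m_yx* > 0. Then the quadratic equation (m_x − m_y)β² − (m_x − m_y + c)β + m_yx* = 0 in β has exactly one root in (0,1), given by β_a^L = 1/2 + (c − √((m_x − m_y)² + c²)) / (2(m_x − m_y)), and this root satisfies 0 < β_a^L < 1/2; the other root is strictly greater than 1. -/

import Mathlib

/-- For m_x > m_y and symmetric attack capacities m_xy* = m_yx* = mc > 0
(so c = m_xy* + m_yx* = 2mc), the quadratic
(m_x−m_y)β² − (m_x−m_y+c)β + m_yx* = 0 has exactly one root in (0,1), namely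
β_a^L = 1/2 + (c − √((m_x−m_y)² + c²))/(2(m_x−m_y)), which satisfies 0 < β_a^L < 1/2;
the other root is strictly greater than 1. -/
theorem stmt_12 (mx my mc : ℝ) (hd : my < mx) (hmc : 0 < mc)
    (c βa : ℝ) (hc : c = mc + mc)
    (hβa : βa = 1 / 2 + (c - Real.sqrt ((mx - my) ^ 2 + c ^ 2)) / (2 * (mx - my))) :
    ((mx - my) * βa ^ 2 - (mx - my + c) * βa + mc = 0) ∧
    0 < βa ∧ βa < 1 / 2 ∧
    (∀ β : ℝ, 0 < β → β < 1 →
      (mx - my) * β ^ 2 - (mx - my + c) * β + mc = 0 → β = βa) ∧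
    (∀ β : ℝ, (mx - my) * β ^ 2 - (mx - my + c) * β + mc = 0 → β ≠ βa → 1 < β) := by
  set d := mx - my with hdd
  have hd0 : 0 < d := by simp [hdd]; linarith
  have hc0 : 0 < c := by linarith
  set s := Real.sqrt (d ^ 2 + c ^ 2) with hs
  have hs0 : 0 ≤ s := Real.sqrt_nonneg _
  have hs2 : s ^ 2 = d ^ 2 + c ^ 2 := Real.sq_sqrt (by positivity)
  have hsd : d < s := by nlinarith
  have hsc : c < s := by nlinarith
  have hsdc : s < d + c := by nlinarith
  have hβa' : βa = (d + c - s) / (2 * d) := by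
    rw [hβa]; field_simp; ring
  have hroot : d * βa ^ 2 - (d + c) * βa + mc = 0 := by
    rw [hβa']; field_simp
    linear_combination hs2 - 2*d*hc
  have hpos : 0 < βa := by
    rw [hβa']; exact div_pos (by linarith) (by linarith)
  have hhalf : βa < 1 / 2 := by
    rw [hβa']
    rw [div_lt_div_iff₀ (by positivity) (by norm_num)]
    linarith
  have key : ∀ β : ℝ, d * β ^ 2 - (d + c) * β + mc = 0 →
      (β - βa) * (β - (d + c + s) / (2 * d)) = 0 := by
    intro β hr
    rw [hβa']
    field_simp
    linear_combination 4*d*hr + 2*d*hc - hs2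
  refine ⟨hroot, hpos, hhalf, ?_, ?_⟩
  · intro β hβ0 hβ1 hroot'
    rcases mul_eq_zero.1 (key β hroot') with h | h
    · linarith [sub_eq_zero.1 h]
    · exfalso
      have hβ : β = (d + c + s) / (2 * d) := by linarith [sub_eq_zero.1 h]
      rw [hβ, div_lt_one (by positivity)] at hβ1
      linarith
  · intro β hroot' hne
    rcases mul_eq_zero.1 (key β hroot') with h | h
    · exact absurd (sub_eq_zero.1 h) hne
    · have hβ : β = (d + c + s) / (2 * d) := by linarith [sub_eq_zero.1 h]
      rw [hβ, lt_div_iff₀ (by positivity)]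
      linarith
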